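/- Let A and B be positive semidefinite bounded self-adjoint operators on a separable Hilbert space H, let t > 0, 0 ≤ α ≤ 1/2 and 1 ≤ p ≤ ∞. Then ‖(A + tI)^{−α} B^α‖_p ≤ ‖(A + tI)^{−1/2} (B + tI)^{1/2}‖_∞^{2α} · ‖(B + tI)^{−α} B^α‖_p (whenever the right-hand side is finite). -/

import Mathlib

open MeasureTheory ContinuousLinearMap
open scoped ENNReal NNReal InnerProductSpace

noncomputable section

namespace SubspaceLearning

variable {H : Type*} [NormedAddCommGroup H] [InnerProductSpace ℂ H] [CompleteSpace H]

/-- The rank-one operator `x ⊗ x : u ↦ ⟨x,u⟩ x`. -/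
def rankOne (x : H) : H →L[ℂ] H := (innerSL ℂ x).smulRight x

/-- The (uncentered) covariance operator of a measure. -/
def covOp [MeasurableSpace H] (ρ : Measure H) : H →L[ℂ] H := ∫ x, rankOne x ∂ρ

/-- The empirical covariance operator of `n` sample points. -/
def empCov {n : ℕ} (x : Fin n → H) : H →L[ℂ] H := (n : ℂ)⁻¹ • ∑ i, rankOne (x i)

/-- The (topological) support of a measure. -/
def mSupport [MeasurableSpace H] (ρ : Measure H) : Set H :=
  {x : H | ∀ s : Set H, IsOpen s → x ∈ s → ρ s ≠ 0}

/-- `S_ρ`: the closed linear span of the support of `ρ`. -/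
def Sspan [MeasurableSpace H] (ρ : Measure H) : Submodule ℂ H :=
  (Submodule.span ℂ (mSupport ρ)).topologicalClosure

/-- Orthogonal projection onto (the closure of) a subspace, as an endomorphism of `H`. -/
def proj (U : Submodule ℂ H) : H →L[ℂ] H :=
  haveI : CompleteSpace U.topologicalClosure :=
    U.isClosed_topologicalClosure.completeSpace_coe
  U.topologicalClosure.subtypeL.comp (U.topologicalClosure.orthogonalProjectionOnto)

/-- `approxNum A k` : the `k`-th approximation number (`= (k+1)`-th largest singular value,
for compact `A`); for a positive compact self-adjoint operator it is the `(k+1)`-th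
largest eigenvalue (with multiplicity). -/
def approxNum (A : H →L[ℂ] H) (k : ℕ) : ℝ :=
  sInf ((fun F : H →L[ℂ] H => ‖A - F‖) ''
    {F | ∃ V : Submodule ℂ H, FiniteDimensional ℂ V ∧ Module.finrank ℂ V ≤ k ∧
      LinearMap.range (F : H →ₗ[ℂ] H) ≤ V})

/-- Schatten `p`-norm, `‖A‖_p = (∑ σ_k(A)^p)^{1/p}` (operator norm for `p = ∞`). -/
def schatten (p : ℝ≥0∞) (A : H →L[ℂ] H) : ℝ≥0∞ :=
  if p = ∞ then ENNReal.ofReal ‖A‖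
  else (∑' k : ℕ, ENNReal.ofReal (approxNum A k ^ p.toReal)) ^ p.toReal⁻¹

/-- `A^α` for a positive operator `A`, via the continuous functional calculus. -/
def opow (A : H →L[ℂ] H) (α : ℝ) : H →L[ℂ] H := cfc (fun s : ℝ => s ^ α) A

/-- `(A + t I)^α` for a positive operator `A`, via the continuous functional calculus. -/
def resPow (A : H →L[ℂ] H) (t α : ℝ) : H →L[ℂ] H := cfc (fun s : ℝ => (s + t) ^ α) A

/-- The distance `d_{α,p}(U,V) = ‖(P_U − P_V) C^α‖_p`. -/
def dap (C : H →L[ℂ] H) (α : ℝ) (p : ℝ≥0∞) (U V : Submodule ℂ H) : ℝ≥0∞ :=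
  schatten p ((proj U - proj V).comp (opow C α))

/-- `W` is the span of eigenvectors of `A` corresponding to its `k` largest
eigenvalues (with multiplicity). -/
def IsTopEigenSubspace (A : H →L[ℂ] H) (k : ℕ) (W : Submodule ℂ H) : Prop :=
  ∃ u : Fin k → H, Orthonormal ℂ u ∧
    (∀ i : Fin k, A (u i) = (approxNum A (i : ℕ) : ℂ) • u i) ∧
    W = Submodule.span ℂ (Set.range u)

/-- Löwner partial order: `A ⪯ B` iff `⟨f, A f⟩ ≤ ⟨f, B f⟩` for all `f`. -/
def Loewner (A B : H →L[ℂ] H) : Prop :=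
  ∀ f : H, (⟪f, A f⟫_ℂ).re ≤ (⟪f, B f⟫_ℂ).re

lemma sr_diff {𝕜 E : Type*} [NormedField 𝕜] [NormedRing E] [NormedAlgebra 𝕜 E] (x : E) :
    spectralRadius 𝕜 x = ⨆ k ∈ spectrum 𝕜 x \ {0}, (‖k‖₊ : ℝ≥0∞) := by
  apply le_antisymm
  · refine iSup₂_le fun k hk => ?_
    rcases eq_or_ne k 0 with rfl | h
    · simp
    · exact le_iSup₂ (f := fun k _ => (‖k‖₊ : ℝ≥0∞)) k ⟨hk, h⟩
  · exact iSup₂_le fun k hk => le_iSup₂ (f := fun k _ => (‖k‖₊ : ℝ≥0∞)) k hk.1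

lemma sr_mul_comm {𝕜 E : Type*} [NormedField 𝕜] [NormedRing E] [NormedAlgebra 𝕜 E] (a b : E) :
    spectralRadius 𝕜 (a * b) = spectralRadius 𝕜 (b * a) := by
  rw [sr_diff, sr_diff, spectrum.nonzero_mul_comm]



variable {A B : H →L[ℂ] H} {t : ℝ}

lemma specnn (hA : A.IsPositive) {s : ℝ} (hs : s ∈ spectrum ℝ A) : 0 ≤ s :=
  spectrum_nonneg_of_nonneg ((ContinuousLinearMap.nonneg_iff_isPositive A).mpr hA) hs

lemma rcont (hA : A.IsPositive) (ht : 0 < t) (β : ℝ) :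
    ContinuousOn (fun s : ℝ => (s + t) ^ β) (spectrum ℝ A) := fun s hs =>
  ((continuousAt_id.add continuousAt_const).rpow_const
    (Or.inl (by have := specnn hA hs; show s + t ≠ 0; positivity))).continuousWithinAt

lemma resPow_sa (A : H →L[ℂ] H) (t β : ℝ) : IsSelfAdjoint (resPow A t β) := cfc_predicate _ A

lemma resPow_mul (hA : A.IsPositive) (ht : 0 < t) (a b : ℝ) :
    resPow A t a * resPow A t b = resPow A t (a + b) := by
  unfold resPow
  rw [← cfc_mul _ _ A (rcont hA ht a) (rcont hA ht b)]
  apply cfc_congr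
  intro s hs
  have h0 : 0 < s + t := by have := specnn hA hs; positivity
  exact (Real.rpow_add h0 a b).symm

lemma resPow_zero (hA : A.IsPositive) (ht : 0 < t) : resPow A t 0 = 1 := by
  unfold resPow
  rw [show (fun s : ℝ => (s + t) ^ (0:ℝ)) = fun _ => (1:ℝ) by ext s; exact Real.rpow_zero _]
  exact cfc_const_one ℝ A hA.isSelfAdjoint

lemma resPow_norm_le_neg [Nontrivial H] (hA : A.IsPositive) (ht : 0 < t) {β : ℝ} (hβ0 : 0 ≤ β) (hβ : β ≤ 1) :
    ‖resPow A t (-β)‖ ≤ max 1 t⁻¹ := by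
  apply norm_cfc_le (by positivity)
  intro s hs
  have h0 : 0 ≤ s := specnn hA hs
  have hst : 0 < s + t := by positivity
  rw [Real.norm_eq_abs, abs_of_nonneg (Real.rpow_nonneg hst.le _)]
  rcases le_or_gt 1 (s + t) with h | h
  · exact le_max_of_le_left (Real.rpow_le_one_of_one_le_of_nonpos h (by linarith))
  · refine le_max_of_le_right ?_
    calc (s + t) ^ (-β) ≤ (s + t) ^ (-1 : ℝ) :=
          Real.rpow_le_rpow_of_exponent_ge hst h.le (by linarith)
    _ = (s + t)⁻¹ := Real.rpow_neg_one _
    _ ≤ t⁻¹ := by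
        apply inv_anti₀ ht; linarith

lemma resPow_norm_le_pos [Nontrivial H] (hA : A.IsPositive) (ht : 0 < t) {β : ℝ} (hβ0 : 0 ≤ β) (hβ : β ≤ 1) :
    ‖resPow A t β‖ ≤ max 1 (‖A‖ + t) := by
  apply norm_cfc_le (by positivity)
  intro s hs
  have h0 : 0 ≤ s := specnn hA hs
  have hst : 0 < s + t := by positivity
  have hsA : s ≤ ‖A‖ := by
    have := spectrum.norm_le_norm_of_mem hs
    rw [Real.norm_eq_abs] at this
    exact (le_abs_self s).trans this
  rw [Real.norm_eq_abs, abs_of_nonneg (Real.rpow_nonneg hst.le _)]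
  rcases le_or_gt (s + t) 1 with h | h
  · exact le_max_of_le_left (Real.rpow_le_one hst.le h hβ0)
  · refine le_max_of_le_right ?_
    calc (s + t) ^ β ≤ (s + t) ^ (1 : ℝ) :=
          Real.rpow_le_rpow_of_exponent_le h.le hβ
    _ = s + t := Real.rpow_one _
    _ ≤ ‖A‖ + t := by linarith



lemma key_mid [Nontrivial H] (hA : A.IsPositive) (hB : B.IsPositive) (ht : 0 < t)
    {a b γ : ℝ} (hγ : a + b = γ + γ) :
    ‖resPow A t (-γ) * resPow B t γ‖ ^ 2 ≤
      ‖resPow A t (-a) * resPow B t a‖ * ‖resPow A t (-b) * resPow B t b‖ := by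
  set u : ℝ → H →L[ℂ] H := fun x => resPow A t x with hu'
  set v : ℝ → H →L[ℂ] H := fun x => resPow B t x with hv'
  have hu : ∀ x y : ℝ, u x * u y = u (x + y) := fun x y => resPow_mul hA ht x y
  have hv : ∀ x y : ℝ, v x * v y = v (x + y) := fun x y => resPow_mul hB ht x y
  have sau : ∀ x, IsSelfAdjoint (u x) := fun x => resPow_sa A t x
  have sav : ∀ x, IsSelfAdjoint (v x) := fun x => resPow_sa B t x
  have hP : ∀ x : ℝ, star (u (-x) * v x) = v x * u (-x) := fun x => by
    rw [star_mul, (sau (-x)).star_eq, (sav x).star_eq]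
  have hSsa : IsSelfAdjoint ((v γ * u (-γ)) * (u (-γ) * v γ)) :=
    hP γ ▸ IsSelfAdjoint.star_mul_self (u (-γ) * v γ)
  have main : ((‖u (-γ) * v γ‖₊ : ℝ≥0∞)) ^ 2 ≤
      (‖u (-b) * v b‖₊ : ℝ≥0∞) * ‖u (-a) * v a‖₊ := by
    calc ((‖u (-γ) * v γ‖₊ : ℝ≥0∞)) ^ 2
        = ((‖(v γ * u (-γ)) * (u (-γ) * v γ)‖₊ : ℝ≥0∞)) := by
          rw [pow_two, ← ENNReal.coe_mul, ← CStarRing.nnnorm_star_mul_self, hP γ]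
      _ = spectralRadius ℂ ((v γ * u (-γ)) * (u (-γ) * v γ)) :=
          (hSsa.spectralRadius_eq_nnnorm).symm
      _ = spectralRadius ℂ ((u (-γ) * v γ) * (v γ * u (-γ))) := sr_mul_comm _ _
      _ = spectralRadius ℂ (u (-γ) * (v γ * (v γ * u (-γ)))) := by rw [mul_assoc]
      _ = spectralRadius ℂ ((v γ * (v γ * u (-γ))) * u (-γ)) := sr_mul_comm _ _
      _ = spectralRadius ℂ (v (γ + γ) * u (-γ + -γ)) := by
          rw [← hv, ← hu]; simp only [mul_assoc]
      _ = spectralRadius ℂ (v (a + b) * u (-(a + b))) := by rw [← hγ, ← neg_add, ← hγ]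
      _ = spectralRadius ℂ ((v a * v b) * (u (-b) * u (-a))) := by
          rw [hv, hu, show -b + -a = -(a + b) by ring]
      _ = spectralRadius ℂ (v a * (v b * (u (-b) * u (-a)))) := by rw [mul_assoc]
      _ = spectralRadius ℂ ((v b * (u (-b) * u (-a))) * v a) := sr_mul_comm _ _
      _ = spectralRadius ℂ ((v b * u (-b)) * (u (-a) * v a)) := by simp only [mul_assoc]
      _ ≤ (‖(v b * u (-b)) * (u (-a) * v a)‖₊ : ℝ≥0∞) := spectrum.spectralRadius_le_nnnorm _
      _ ≤ (‖v b * u (-b)‖₊ : ℝ≥0∞) * ‖u (-a) * v a‖₊ := by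
          rw [← ENNReal.coe_mul]; exact ENNReal.coe_le_coe.mpr (nnnorm_mul_le _ _)
      _ = (‖u (-b) * v b‖₊ : ℝ≥0∞) * ‖u (-a) * v a‖₊ := by
          rw [← hP b, nnnorm_star]
  have main' : ‖u (-γ) * v γ‖₊ ^ 2 ≤ ‖u (-b) * v b‖₊ * ‖u (-a) * v a‖₊ := by
    rw [← ENNReal.coe_le_coe]; push_cast; exact main
  calc ‖u (-γ) * v γ‖ ^ 2 ≤ (‖u (-b) * v b‖₊ * ‖u (-a) * v a‖₊ : ℝ≥0) := by
        exact_mod_cast main'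
    _ = ‖u (-a) * v a‖ * ‖u (-b) * v b‖ := by push_cast; ring

lemma heinz [Nontrivial H] (hA : A.IsPositive) (hB : B.IsPositive) (ht : 0 < t)
    {α : ℝ} (hα0 : 0 ≤ α) (hα : α ≤ 2⁻¹) :
    ‖resPow A t (-α) * resPow B t α‖ ≤ ‖resPow A t (-2⁻¹) * resPow B t 2⁻¹‖ ^ (2 * α) := by
  set g : ℝ → ℝ := fun x => ‖resPow A t (-x) * resPow B t x‖ with hg
  have gnn : ∀ x, 0 ≤ g x := fun x => norm_nonneg _
  have gmid : ∀ a b γ : ℝ, a + b = γ + γ → g γ ^ 2 ≤ g a * g b := fun a b γ hγ =>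
    key_mid hA hB ht hγ
  have g0 : g 0 = 1 := by
    simp only [hg, neg_zero, resPow_zero hA ht, resPow_zero hB ht, one_mul, norm_one]
  set c : ℝ := g 2⁻¹ with hcdef
  have hone : resPow A t (-2⁻¹) * resPow B t 2⁻¹ * (resPow B t (-2⁻¹) * resPow A t 2⁻¹) = 1 := by
    have e1 : resPow B t 2⁻¹ * resPow B t (-2⁻¹) = 1 := by
      rw [resPow_mul hB ht]; norm_num [resPow_zero hB ht]
    calc resPow A t (-2⁻¹) * resPow B t 2⁻¹ * (resPow B t (-2⁻¹) * resPow A t 2⁻¹)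
        = resPow A t (-2⁻¹) * (resPow B t 2⁻¹ * resPow B t (-2⁻¹)) * resPow A t 2⁻¹ := by
          simp only [mul_assoc]
      _ = resPow A t (-2⁻¹) * resPow A t 2⁻¹ := by rw [e1, mul_one]
      _ = 1 := by rw [resPow_mul hA ht]; norm_num [resPow_zero hA ht]
  have hc : 0 < c := by
    have h1 : (1 : ℝ) ≤ c * ‖resPow B t (-2⁻¹) * resPow A t 2⁻¹‖ := by
      calc (1 : ℝ) = ‖(1 : H →L[ℂ] H)‖ := norm_one.symm
        _ = ‖resPow A t (-2⁻¹) * resPow B t 2⁻¹ * (resPow B t (-2⁻¹) * resPow A t 2⁻¹)‖ := by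
            rw [hone]
        _ ≤ c * ‖resPow B t (-2⁻¹) * resPow A t 2⁻¹‖ := norm_mul_le _ _
    nlinarith [norm_nonneg (resPow B t (-2⁻¹) * resPow A t 2⁻¹), gnn 2⁻¹]
  set M : ℝ := max 1 t⁻¹ * max 1 (‖B‖ + t) with hMdef
  have hM : ∀ x : ℝ, 0 ≤ x → x ≤ 2⁻¹ → g x ≤ M := by
    intro x h1 h2
    calc g x ≤ ‖resPow A t (-x)‖ * ‖resPow B t x‖ := norm_mul_le _ _
      _ ≤ M := by
          apply mul_le_mul (resPow_norm_le_neg hA ht h1 (by linarith))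
            (resPow_norm_le_pos hB ht h1 (by linarith)) (norm_nonneg _) (by positivity)
  set K : ℝ := M * max 1 c⁻¹ with hKdef
  set h : ℝ → ℝ := fun x => g x * c ^ (-(2 * x)) with hh
  have hh0 : ∀ x, 0 ≤ h x := fun x => mul_nonneg (gnn x) (Real.rpow_nonneg hc.le _)
  have hK : ∀ x : ℝ, 0 ≤ x → x ≤ 2⁻¹ → h x ≤ K := by
    intro x h1 h2
    have hcb : c ^ (-(2 * x)) ≤ max 1 c⁻¹ := by
      rcases le_or_gt 1 c with hcc | hcc
      · exact le_max_of_le_left (Real.rpow_le_one_of_one_le_of_nonpos hcc (by linarith))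
      · refine le_max_of_le_right ?_
        calc c ^ (-(2 * x)) ≤ c ^ (-1 : ℝ) :=
              Real.rpow_le_rpow_of_exponent_ge hc hcc.le (by linarith)
          _ = c⁻¹ := Real.rpow_neg_one _
    exact mul_le_mul (hM x h1 h2) hcb (Real.rpow_nonneg hc.le _)
      ((gnn 2⁻¹).trans (hM 2⁻¹ (by norm_num) le_rfl))
  have hmid : ∀ a b γ : ℝ, a + b = γ + γ → h γ ^ 2 ≤ h a * h b := by
    intro a b γ hγ
    have e : (c ^ (-(2 * γ))) ^ 2 = c ^ (-(2 * a)) * c ^ (-(2 * b)) := by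
      rw [sq, ← Real.rpow_add hc, show -(2 * γ) + -(2 * γ) = -(2 * a) + -(2 * b) by linarith,
        Real.rpow_add hc]
    calc h γ ^ 2 = g γ ^ 2 * (c ^ (-(2 * γ))) ^ 2 := by rw [hh]; ring
      _ ≤ g a * g b * (c ^ (-(2 * a)) * c ^ (-(2 * b))) := by
          rw [e]; exact mul_le_mul_of_nonneg_right (gmid a b γ hγ)
            (mul_nonneg (Real.rpow_nonneg hc.le _) (Real.rpow_nonneg hc.le _))
      _ = h a * h b := by rw [hh]; ring
  have h0 : h 0 = 1 := by
    simp only [hh, g0]; norm_num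
  have hhalf : h 2⁻¹ = 1 := by
    have : -(2 * (2⁻¹ : ℝ)) = -1 := by norm_num
    simp only [hh, this, Real.rpow_neg_one, ← hcdef]
    field_simp
  have claim : ∀ n : ℕ, ∀ x : ℝ, 0 ≤ x → x ≤ 2⁻¹ → h x ^ 2 ^ n ≤ K := by
    intro n
    induction n with
    | zero => intro x h1 h2; simpa using hK x h1 h2
    | succ n ih =>
      intro x h1 h2
      have step : ∃ y : ℝ, 0 ≤ y ∧ y ≤ 2⁻¹ ∧ h x ^ 2 ≤ h y := by
        rcases le_or_gt x 4⁻¹ with hx | hx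
        · refine ⟨x + x, by linarith, by linarith, ?_⟩
          have := hmid 0 (x + x) x (by ring)
          rwa [h0, one_mul] at this
        · refine ⟨x + x - 2⁻¹, by linarith, by linarith, ?_⟩
          have := hmid (x + x - 2⁻¹) 2⁻¹ x (by ring)
          rwa [hhalf, mul_one] at this
      obtain ⟨y, hy0, hy2, hy⟩ := step
      calc h x ^ 2 ^ (n + 1) = (h x ^ 2) ^ 2 ^ n := by
            rw [← pow_mul, pow_succ']
        _ ≤ h y ^ 2 ^ n := pow_le_pow_left₀ (sq_nonneg _) hy _
        _ ≤ K := ih y hy0 hy2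
  have hle1 : h α ≤ 1 := by
    by_contra hgt
    push_neg at hgt
    obtain ⟨n, hn⟩ := pow_unbounded_of_one_lt K hgt
    have h2 : h α ^ n ≤ h α ^ 2 ^ n :=
      pow_le_pow_right₀ hgt.le (Nat.lt_two_pow_self (n := n)).le
    have := claim n α hα0 hα
    linarith
  have hprod : c ^ (-(2 * α)) * c ^ (2 * α) = 1 := by
    rw [← Real.rpow_add hc]; norm_num
  calc g α = g α * c ^ (-(2 * α)) * c ^ (2 * α) := by rw [mul_assoc, hprod, mul_one]
    _ ≤ 1 * c ^ (2 * α) :=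
        mul_le_mul_of_nonneg_right hle1 (Real.rpow_nonneg hc.le _)
    _ = c ^ (2 * α) := one_mul _


lemma an_bdd (A : H →L[ℂ] H) (k : ℕ) :
    BddBelow ((fun F : H →L[ℂ] H => ‖A - F‖) ''
      {F | ∃ V : Submodule ℂ H, FiniteDimensional ℂ V ∧ Module.finrank ℂ V ≤ k ∧
        LinearMap.range (F : H →ₗ[ℂ] H) ≤ V}) :=
  ⟨0, fun r ⟨F, _, hF⟩ => hF ▸ norm_nonneg _⟩

lemma an_mem_zero (A : H →L[ℂ] H) (k : ℕ) :
    ‖A - 0‖ ∈ ((fun F : H →L[ℂ] H => ‖A - F‖) ''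
      {F | ∃ V : Submodule ℂ H, FiniteDimensional ℂ V ∧ Module.finrank ℂ V ≤ k ∧
        LinearMap.range (F : H →ₗ[ℂ] H) ≤ V}) :=
  ⟨0, ⟨⊥, inferInstance, by simp, by simp⟩, rfl⟩

lemma approxNum_nonneg (A : H →L[ℂ] H) (k : ℕ) : 0 ≤ approxNum A k :=
  Real.sInf_nonneg fun r ⟨F, _, hF⟩ => hF ▸ norm_nonneg _

lemma approxNum_zero (k : ℕ) : approxNum (0 : H →L[ℂ] H) k = 0 := by
  refine le_antisymm ?_ (approxNum_nonneg 0 k)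
  have := csInf_le (an_bdd (0 : H →L[ℂ] H) k) (an_mem_zero 0 k)
  simpa [approxNum] using this

lemma approxNum_mul_le (x y : H →L[ℂ] H) (k : ℕ) :
    approxNum (x * y) k ≤ ‖x‖ * approxNum y k := by
  rcases (norm_nonneg x).eq_or_lt with hx | hx
  · have hx0 : x = 0 := norm_eq_zero.mp hx.symm
    rw [hx0, zero_mul, approxNum_zero]
    exact mul_nonneg (norm_nonneg _) (approxNum_nonneg y k)
  · rw [← div_le_iff₀' hx]
    refine le_csInf ⟨_, an_mem_zero y k⟩ ?_
    rintro r ⟨F, ⟨V, hV1, hV2, hV3⟩, rfl⟩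
    rw [div_le_iff₀' hx]
    have hmem : ‖x * y - x * F‖ ∈ ((fun G : H →L[ℂ] H => ‖x * y - G‖) ''
        {G | ∃ W : Submodule ℂ H, FiniteDimensional ℂ W ∧ Module.finrank ℂ W ≤ k ∧
          LinearMap.range (G : H →ₗ[ℂ] H) ≤ W}) := by
      refine ⟨x * F, ⟨V.map (x : H →ₗ[ℂ] H), ?_, ?_, ?_⟩, rfl⟩
      · haveI := hV1; infer_instance
      · exact le_trans (Submodule.finrank_map_le _ _) hV2
      · show LinearMap.range ((x.comp F : H →L[ℂ] H) : H →ₗ[ℂ] H) ≤ V.map (x : H →ₗ[ℂ] H)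
        rw [ContinuousLinearMap.toLinearMap_comp, LinearMap.range_comp]
        exact Submodule.map_mono hV3
    calc approxNum (x * y) k ≤ ‖x * y - x * F‖ := csInf_le (an_bdd (x * y) k) hmem
      _ = ‖x * (y - F)‖ := by rw [mul_sub]
      _ ≤ ‖x‖ * ‖y - F‖ := norm_mul_le _ _

lemma schatten_zero {p : ℝ≥0∞} (hp : 1 ≤ p) : schatten p (0 : H →L[ℂ] H) = 0 := by
  unfold schatten
  split_ifs with h
  · simp
  · have hq : 0 < p.toReal := ENNReal.toReal_pos (by rintro rfl; simp at hp) h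
    simp [approxNum_zero, Real.zero_rpow hq.ne', ENNReal.zero_rpow_of_pos (inv_pos.mpr hq)]

lemma schatten_mul_le {p : ℝ≥0∞} (hp : 1 ≤ p) (x y : H →L[ℂ] H) :
    schatten p (x * y) ≤ ENNReal.ofReal ‖x‖ * schatten p y := by
  unfold schatten
  split_ifs with h
  · rw [← ENNReal.ofReal_mul (norm_nonneg x)]
    exact ENNReal.ofReal_le_ofReal (norm_mul_le x y)
  · have hq : 0 < p.toReal := ENNReal.toReal_pos (by rintro rfl; simp at hp) h
    have hterm : ∀ k : ℕ, ENNReal.ofReal (approxNum (x * y) k ^ p.toReal) ≤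
        ENNReal.ofReal (‖x‖ ^ p.toReal) * ENNReal.ofReal (approxNum y k ^ p.toReal) := by
      intro k
      rw [← ENNReal.ofReal_mul (Real.rpow_nonneg (norm_nonneg x) _),
        ← Real.mul_rpow (norm_nonneg x) (approxNum_nonneg y k)]
      exact ENNReal.ofReal_le_ofReal
        (Real.rpow_le_rpow (approxNum_nonneg _ k) (approxNum_mul_le x y k) hq.le)
    calc (∑' k : ℕ, ENNReal.ofReal (approxNum (x * y) k ^ p.toReal)) ^ p.toReal⁻¹
        ≤ (∑' k : ℕ, ENNReal.ofReal (‖x‖ ^ p.toReal) *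
            ENNReal.ofReal (approxNum y k ^ p.toReal)) ^ p.toReal⁻¹ :=
          ENNReal.rpow_le_rpow (ENNReal.tsum_le_tsum hterm) (inv_nonneg.mpr hq.le)
      _ = (ENNReal.ofReal (‖x‖ ^ p.toReal) *
            ∑' k : ℕ, ENNReal.ofReal (approxNum y k ^ p.toReal)) ^ p.toReal⁻¹ := by
          rw [ENNReal.tsum_mul_left]
      _ = ENNReal.ofReal (‖x‖ ^ p.toReal) ^ p.toReal⁻¹ *
            (∑' k : ℕ, ENNReal.ofReal (approxNum y k ^ p.toReal)) ^ p.toReal⁻¹ :=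
          ENNReal.mul_rpow_of_nonneg _ _ (inv_nonneg.mpr hq.le)
      _ = ENNReal.ofReal ‖x‖ * (∑' k : ℕ, ENNReal.ofReal (approxNum y k ^ p.toReal)) ^ p.toReal⁻¹ := by
          rw [ENNReal.ofReal_rpow_of_nonneg (Real.rpow_nonneg (norm_nonneg x) _)
            (inv_nonneg.mpr hq.le), Real.rpow_rpow_inv (norm_nonneg x) hq.ne']


theorem statement16 (A B : H →L[ℂ] H) (hA : A.IsPositive) (hB : B.IsPositive)
    {t : ℝ} (ht : 0 < t) {α : ℝ} (hα0 : 0 ≤ α) (hα : α ≤ 2⁻¹) {p : ℝ≥0∞} (hp : 1 ≤ p) :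
    schatten p ((resPow A t (-α)).comp (opow B α)) ≤
      ENNReal.ofReal (‖(resPow A t (-2⁻¹)).comp (resPow B t 2⁻¹)‖ ^ (2 * α)) *
        schatten p ((resPow B t (-α)).comp (opow B α)) := by
  rcases subsingleton_or_nontrivial H with hsub | hnt
  · haveI : Subsingleton (H →L[ℂ] H) := ⟨fun f g => by ext x; exact Subsingleton.elim _ _⟩
    rw [Subsingleton.elim ((resPow A t (-α)).comp (opow B α)) 0, schatten_zero hp]
    exact zero_le
  · have e1 : resPow B t α * resPow B t (-α) = 1 := by
      rw [resPow_mul hB ht, add_neg_cancel, resPow_zero hB ht]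
    have factor : (resPow A t (-α)).comp (opow B α) =
        (resPow A t (-α) * resPow B t α) * ((resPow B t (-α)).comp (opow B α)) := by
      show resPow A t (-α) * opow B α = _
      calc resPow A t (-α) * opow B α
          = resPow A t (-α) * ((resPow B t α * resPow B t (-α)) * opow B α) := by
            rw [e1, one_mul]
        _ = _ := by simp only [mul_assoc]; rfl
    rw [factor]
    refine le_trans (schatten_mul_le hp _ _) ?_
    exact mul_le_mul_left (ENNReal.ofReal_le_ofReal (heinz hA hB ht hα0 hα)) _


end SubspaceLearning
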